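/- Let X be uniformly distributed on the open unit disc and let z be in the unit disc. Then E[log|z - X|] = (|z|² - 1)/2. -/

import Mathlib

open Real Complex MeasureTheory intervalIntegral Set


lemma circle_log_zero {b : ℂ} (hb : ‖b‖ < 1) :
    ∫ θ in (0:ℝ)..(2*π), Real.log (‖1 - b * Complex.exp (θ * I)‖) = 0 := by
  set g : ℂ → ℂ := fun w => Complex.log (1 - b * w) with hg
  have hne : ∀ w : ℂ, ‖w‖ ≤ 1 → (1 - b * w).re > 0 := by
    intro w hw
    have h1 : ‖b * w‖ < 1 := by
      rw [norm_mul]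
      calc ‖b‖ * ‖w‖ ≤ ‖b‖ * 1 :=
        mul_le_mul_of_nonneg_left hw (norm_nonneg b)
      _ < 1 := by simpa using hb
    have h2 : (b * w).re < 1 := lt_of_le_of_lt (Complex.re_le_norm _) h1
    simp only [Complex.sub_re, Complex.one_re]; linarith
  have hdiff : ∀ w ∈ Metric.closedBall (0:ℂ) 1, DifferentiableAt ℂ g w := by
    intro w hw
    simp only [Metric.mem_closedBall, dist_zero_right] at hw
    have : (1 - b * w) ∈ Complex.slitPlane := Or.inl (hne w hw)
    exact (Complex.differentiableAt_log this).comp (f := fun w => 1 - b * w) w (by fun_prop)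
  have hcont : ContinuousOn g (Metric.closedBall (0:ℂ) 1) :=
    fun w hw => (hdiff w hw).continuousAt.continuousWithinAt
  have key := Complex.circleIntegral_sub_center_inv_smul_of_differentiable_on_off_countable
    (one_pos) (Set.countable_empty) (c := 0) hcont
    (fun w hw => hdiff w (Metric.ball_subset_closedBall hw.1))
  rw [hg] at key
  simp only [Complex.log_one, mul_zero, sub_zero, smul_zero] at key
  -- key : (∮ z in C(0, 1), z⁻¹ • g z) = 0  (after simp, since g 0 = log 1 = 0)
  rw [circleIntegral] at key
  simp only [deriv_circleMap, circleMap_zero, sub_zero, smul_eq_mul, Complex.ofReal_one, one_mul] at key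
  have hne0 : ∀ θ : ℝ, (1 : ℂ) * Complex.exp (θ * I) ≠ 0 := by
    intro θ; simp [Complex.exp_ne_zero]
  have key2 : ∫ θ in (0:ℝ)..(2*π), g (Complex.exp (θ * I)) = 0 := by
    have : ∀ θ : ℝ, Complex.exp (↑θ * I) * I * ((Complex.exp (↑θ * I))⁻¹ * g (Complex.exp (↑θ * I))) = I * g (Complex.exp (↑θ * I)) := by
      intro θ
      have h := Complex.exp_ne_zero (↑θ * I)
      field_simp
    rw [intervalIntegral.integral_congr (fun θ _ => this θ)] at key
    rw [intervalIntegral.integral_const_mul] at key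
    simpa [Complex.I_ne_zero] using key
  have hgc : Continuous fun θ : ℝ => g (Complex.exp (θ * I)) := by
    apply ContinuousOn.comp_continuous (s := Metric.closedBall (0:ℂ) 1) hcont
    · fun_prop
    · intro θ; simp [Metric.mem_closedBall, Complex.norm_exp]
  have hint : IntervalIntegrable (fun θ : ℝ => g (Complex.exp (θ * I))) volume 0 (2*π) :=
    hgc.intervalIntegrable _ _
  have := Complex.reCLM.intervalIntegral_comp_comm hint
  rw [key2] at this
  simp only [map_zero] at this
  conv_rhs => rw [← this]
  apply intervalIntegral.integral_congr
  intro θ _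
  simp only [Complex.reCLM_apply, hg, Complex.log_re]


lemma one_sub_mul_exp_ne {b : ℂ} (hb : ‖b‖ < 1) (θ : ℝ) :
    (1 : ℂ) - b * Complex.exp (θ * I) ≠ 0 := by
  intro h
  have : ‖b * Complex.exp (θ * I)‖ = 1 := by
    have : b * Complex.exp (θ * I) = 1 := by linear_combination -h
    rw [this]; simp
  rw [norm_mul, Complex.norm_exp] at this
  simp at this
  nlinarith [norm_nonneg b]

lemma circle_avg_log (z : ℂ) {r : ℝ} (hr : 0 ≤ r) (hne : ‖z‖ ≠ r) :
    ∫ θ in (0:ℝ)..(2*π), Real.log (‖z - r * Complex.exp (θ * I)‖)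
      = 2 * π * Real.log (max (‖z‖) r) := by
  set a := ‖z‖ with ha
  obtain ⟨p, b, hp, hb, hpmax, hid⟩ :
      ∃ (p : ℝ) (b : ℂ), 0 < p ∧ ‖b‖ < 1 ∧ p = max a r ∧
        ∀ θ : ℝ, ‖z - r * Complex.exp (θ * I)‖
          = p * ‖1 - b * Complex.exp (θ * I)‖ := by
    rcases lt_or_gt_of_ne hne with h | h
    · -- a < r, so r > 0
      have hr0 : 0 < r := lt_of_le_of_lt (norm_nonneg z) h
      refine ⟨r, (starRingEnd ℂ) z / r, hr0, ?_, (max_eq_right h.le).symm, ?_⟩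
      · rw [norm_div, Complex.norm_conj, Complex.norm_real, Real.norm_eq_abs, abs_of_pos hr0]
        exact (div_lt_one hr0).mpr h
      · intro θ
        have h1 : z - r * Complex.exp (θ * I)
            = (-Complex.exp (θ * I)) * r * (1 - z / r * Complex.exp (-(θ:ℂ) * I)) := by
          have : (r:ℂ) ≠ 0 := Complex.ofReal_ne_zero.mpr hr0.ne'
          have he : Complex.exp (↑θ * I) * Complex.exp (-(↑θ * I)) = 1 := by
            rw [← Complex.exp_add]; simp
          field_simp
          linear_combination (-z) * he
        rw [h1]
        rw [norm_mul, norm_mul]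
        have h2 : ‖1 - z / r * Complex.exp (-(θ:ℂ) * I)‖
            = ‖1 - (starRingEnd ℂ) z / r * Complex.exp (θ * I)‖ := by
          rw [← Complex.norm_conj]
          congr 1
          simp only [map_sub, map_one, map_mul, map_div₀, Complex.conj_conj,
            Complex.conj_ofReal, ← Complex.exp_conj, map_neg, Complex.conj_I, mul_neg,
            neg_mul, neg_neg]
        rw [h2]
        simp [Complex.norm_exp, Complex.norm_real, _root_.abs_of_pos hr0]
    · -- r < a, so z ≠ 0
      have ha0 : 0 < a := lt_of_le_of_lt hr h
      have hz0 : z ≠ 0 := norm_ne_zero_iff.mp ha0.ne'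
      refine ⟨a, (r : ℂ) / z, ha0, ?_, (max_eq_left h.le).symm, ?_⟩
      · rw [norm_div, Complex.norm_real, Real.norm_eq_abs]; rw [_root_.abs_of_nonneg hr]
        exact (div_lt_one ha0).mpr h
      · intro θ
        have h1 : z - r * Complex.exp (θ * I) = z * (1 - (r:ℂ) / z * Complex.exp (θ * I)) := by
          field_simp
        rw [h1, norm_mul]
  have hcong : ∀ θ ∈ Set.uIcc (0:ℝ) (2*π),
      Real.log (‖z - r * Complex.exp (θ * I)‖)
        = Real.log p + Real.log (‖1 - b * Complex.exp (θ * I)‖) := by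
    intro θ _
    rw [hid θ, Real.log_mul hp.ne' (norm_ne_zero_iff.mpr (one_sub_mul_exp_ne hb θ))]
  rw [intervalIntegral.integral_congr hcong]
  have hcont : Continuous fun θ : ℝ =>
      Real.log (‖1 - b * Complex.exp (θ * I)‖) := by
    apply Continuous.log
    · exact continuous_norm.comp (by fun_prop)
    · exact fun θ => norm_ne_zero_iff.mpr (one_sub_mul_exp_ne hb θ)
  rw [intervalIntegral.integral_add (intervalIntegrable_const) (hcont.intervalIntegrable _ _),
    circle_log_zero hb, intervalIntegral.integral_const, hpmax]
  simp


lemma xlogx_antideriv {r : ℝ} (hr : 0 < r) :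
    HasDerivAt (fun x : ℝ => x^2/2 * Real.log x - x^2/4) (r * Real.log r) r := by
  have h1 : HasDerivAt (fun x : ℝ => x^2/2 * Real.log x) (r * Real.log r + r/2) r := by
    have := ((hasDerivAt_pow 2 r).div_const 2).mul (Real.hasDerivAt_log hr.ne')
    refine this.congr_deriv ?_
    field_simp
    ring
  have h2 : HasDerivAt (fun x : ℝ => x^2/4) (r/2) r := by
    have h2 := (hasDerivAt_pow 2 r).div_const 4
    norm_num at h2
    refine h2.congr_deriv ?_
    ring
  exact (h1.sub h2).congr_deriv (by ring)

lemma xlogx_cont : Continuous (fun x : ℝ => x^2/2 * Real.log x - x^2/4) := by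
  have : (fun x : ℝ => x^2/2 * Real.log x - x^2/4)
      = fun x : ℝ => (x * Real.log x) * (x/2) - x^2/4 := by
    funext x; ring
  rw [this]
  exact (Real.continuous_mul_log.mul (by fun_prop)).sub (by fun_prop)

lemma integral_xlogx {a : ℝ} (ha : 0 ≤ a) :
    ∫ r in a..1, r * Real.log r = (-1/4) - (a^2/2 * Real.log a - a^2/4) := by
  by_cases ha1 : a ≤ 1
  · rw [intervalIntegral.integral_eq_sub_of_hasDeriv_right_of_le ha1
      (xlogx_cont.continuousOn) (fun r hr => (xlogx_antideriv (lt_of_le_of_lt ha hr.1)).hasDerivWithinAt)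
      (Real.continuous_mul_log.intervalIntegrable a 1)]
    norm_num
  · push_neg at ha1
    rw [intervalIntegral.integral_eq_sub_of_hasDerivAt
      (fun r hr => xlogx_antideriv (by
        rcases Set.mem_uIcc.mp hr with h | h
        · linarith [h.1]
        · linarith [h.1]))
      (Real.continuous_mul_log.intervalIntegrable a 1)]
    norm_num

lemma radial_integral {a : ℝ} (ha : 0 ≤ a) (ha1 : a < 1) :
    ∫ r in (0:ℝ)..1, r * (2 * π * Real.log (max a r)) = π * (a^2 - 1) / 2 := by
  have hsplit : ∫ r in (0:ℝ)..1, r * (2 * π * Real.log (max a r))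
      = (∫ r in (0:ℝ)..a, r * (2 * π * Real.log (max a r)))
        + ∫ r in a..1, r * (2 * π * Real.log (max a r)) := by
    rw [intervalIntegral.integral_add_adjacent_intervals]
    · -- integrable on 0..a
      rcases eq_or_lt_of_le ha with h | h
      · rw [← h]
      · apply ContinuousOn.intervalIntegrable
        apply ContinuousOn.mul continuousOn_id
        apply ContinuousOn.mul continuousOn_const
        apply ContinuousOn.log ((continuous_const.max continuous_id).continuousOn)
        intro x _
        exact ne_of_gt (lt_of_lt_of_le h (le_max_left _ _))
    · -- integrable on a..1
      apply ContinuousOn.intervalIntegrable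
      rcases eq_or_lt_of_le ha with h | h
      · subst h
        have hnice : Continuous fun r : ℝ => (r * Real.log r) * (2 * π) :=
          Real.continuous_mul_log.mul continuous_const
        apply hnice.continuousOn.congr
        intro x hx
        rw [Set.uIcc_of_le (by norm_num : (0:ℝ) ≤ 1)] at hx
        simp only [max_eq_right hx.1]
        ring
      · apply ContinuousOn.mul continuousOn_id
        apply ContinuousOn.mul continuousOn_const
        apply ContinuousOn.log ((continuous_const.max continuous_id).continuousOn)
        intro x _
        exact ne_of_gt (lt_of_lt_of_le h (le_max_left _ _))
  rw [hsplit]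
  have h1 : ∫ r in (0:ℝ)..a, r * (2 * π * Real.log (max a r))
      = π * a^2 * Real.log a := by
    have : ∫ r in (0:ℝ)..a, r * (2 * π * Real.log (max a r))
        = ∫ r in (0:ℝ)..a, (2 * π * Real.log a) * r := by
      apply intervalIntegral.integral_congr
      intro x hx
      rw [Set.uIcc_of_le ha] at hx
      simp only [max_eq_left hx.2]
      ring
    rw [this, intervalIntegral.integral_const_mul, integral_id]
    ring
  have h2 : ∫ r in a..1, r * (2 * π * Real.log (max a r))
      = 2 * π * ((-1/4) - (a^2/2 * Real.log a - a^2/4)) := by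
    have : ∫ r in a..1, r * (2 * π * Real.log (max a r))
        = ∫ r in a..1, (2 * π) * (r * Real.log r) := by
      apply intervalIntegral.integral_congr
      intro x hx
      rw [Set.uIcc_of_le ha1.le] at hx
      simp only [max_eq_right hx.1]
      ring
    rw [this, intervalIntegral.integral_const_mul, integral_xlogx ha]
  rw [h1, h2]
  ring


lemma sub_circle_pos (z : ℂ) {r : ℝ} (hr : 0 ≤ r) (hne : ‖z‖ ≠ r) (θ : ℝ) :
    0 < ‖z - r * Complex.exp (θ * I)‖ := by
  rcases (norm_nonneg (z - r * Complex.exp (θ * I))).lt_or_eq with h | h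
  · exact h
  · exfalso
    apply hne
    have : z = r * Complex.exp (θ * I) := by
      have := norm_eq_zero.mp h.symm
      linear_combination this
    rw [this, norm_mul, Complex.norm_exp, Complex.norm_real, Real.norm_eq_abs, _root_.abs_of_nonneg hr]
    simp

lemma log_abs_cont (z : ℂ) {r : ℝ} (hr : 0 ≤ r) (hne : ‖z‖ ≠ r) :
    Continuous fun θ : ℝ => Real.log (‖z - r * Complex.exp (θ * I)‖) := by
  apply Continuous.log
  · exact continuous_norm.comp (by fun_prop)
  · exact fun θ => (sub_circle_pos z hr hne θ).ne'

lemma log_abs_periodic (z : ℂ) (r : ℝ) :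
    Function.Periodic (fun θ : ℝ => Real.log (‖z - r * Complex.exp (θ * I)‖))
      (2 * π) := by
  intro θ
  have : Complex.exp ((↑(θ + 2*π)) * I) = Complex.exp (θ * I) := by
    push_cast
    rw [add_mul, Complex.exp_add, Complex.exp_two_pi_mul_I, mul_one]
  simp only [this]

lemma circle_avg_Ioo (z : ℂ) {r : ℝ} (hr : 0 ≤ r) (hne : ‖z‖ ≠ r) :
    ∫ θ in Set.Ioo (-π) π, Real.log (‖z - r * Complex.exp (θ * I)‖)
      = 2 * π * Real.log (max (‖z‖) r) := by
  rw [← integral_Ioc_eq_integral_Ioo,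
    ← intervalIntegral.integral_of_le (by linarith [Real.pi_pos] : -π ≤ π)]
  have h := (log_abs_periodic z r).intervalIntegral_add_eq (-π) 0
  rw [zero_add] at h
  rw [show -π + 2*π = π by ring] at h
  rw [h, circle_avg_log z hr hne]

lemma abs_log_le {x : ℝ} (h0 : 0 < x) (h2 : x ≤ 2) :
    |Real.log x| ≤ 2 * Real.log 2 - Real.log x := by
  have hl2 : (0:ℝ) ≤ Real.log 2 := Real.log_nonneg one_le_two
  rcases le_or_gt 1 x with h | h
  · rw [_root_.abs_of_nonneg (Real.log_nonneg h)]
    have : Real.log x ≤ Real.log 2 := Real.log_le_log h0 h2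
    linarith
  · rw [_root_.abs_of_nonpos (Real.log_nonpos h0.le h.le)]
    linarith

lemma polar_symm (p : ℝ × ℝ) :
    Complex.polarCoord.symm p = (p.1 : ℂ) * Complex.exp (p.2 * I) := by
  rw [Complex.polarCoord_symm_apply, Complex.exp_mul_I]
  norm_num [Complex.ofReal_cos, Complex.ofReal_sin]

theorem ball_integral (z : ℂ) (hz : ‖z‖ < 1) :
    ∫ w in Metric.ball (0:ℂ) 1, Real.log (‖z - w‖)
      = π * ((‖z‖)^2 - 1) / 2 := by
  set a := ‖z‖ with ha
  have ha0 : 0 ≤ a := norm_nonneg z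
  have hπ : (0:ℝ) < π := Real.pi_pos
  set G : ℝ × ℝ → ℝ := fun p => p.1 * Real.log (‖z - p.1 * Complex.exp (p.2 * I)‖)
    with hG
  set S : Set (ℝ × ℝ) := Set.Ioo 0 1 ×ˢ Set.Ioo (-π) π with hS
  -- measurability
  have hGmeas : Measurable G := by
    apply Measurable.mul measurable_fst
    apply Real.measurable_log.comp
    exact (continuous_norm.comp (by fun_prop : Continuous fun p : ℝ × ℝ =>
      z - ↑p.1 * Complex.exp (↑p.2 * I))).measurable
  -- integrability of G on the product
  have hae : ∀ᵐ r : ℝ ∂(volume.restrict (Set.Ioo (0:ℝ) 1)), r ≠ a := by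
    apply ae_restrict_of_ae
    have h0 : (volume : Measure ℝ) {a} = 0 := measure_singleton a
    filter_upwards [compl_mem_ae_iff.mpr h0] with r hr
    exact hr
  -- fiberwise integrability and the inner integral value
  have hfiber : ∀ r : ℝ, 0 ≤ r → r ≠ a →
      IntegrableOn (fun θ => G (r, θ)) (Set.Ioo (-π) π) volume := by
    intro r hr hra
    have hc : Continuous fun θ => G (r, θ) :=
      continuous_const.mul (log_abs_cont z hr (Ne.symm hra))
    exact (hc.integrableOn_Icc).mono_set Set.Ioo_subset_Icc_self
  have habs2 : ∀ r : ℝ, 0 ≤ r → r < 1 → ∀ θ : ℝ,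
      ‖z - r * Complex.exp (θ * I)‖ ≤ 2 := by
    intro r hr hr1 θ
    calc ‖z - r * Complex.exp (θ * I)‖
        ≤ ‖z‖ + ‖r * Complex.exp (θ * I)‖ := by
          simpa [sub_eq_add_neg] using norm_add_le z (-(r * Complex.exp (θ * I)))
      _ ≤ 2 := by
          rw [norm_mul, Complex.norm_exp, Complex.norm_real, Real.norm_eq_abs, _root_.abs_of_nonneg hr]
          have hre : ((θ:ℂ) * I).re = 0 := by simp
          rw [hre, Real.exp_zero, mul_one, ← ha]
          linarith
  have hint : Integrable G
      ((volume.restrict (Set.Ioo (0:ℝ) 1)).prod (volume.restrict (Set.Ioo (-π) π))) := by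
    rw [integrable_prod_iff (hGmeas.aestronglyMeasurable)]
    constructor
    · filter_upwards [ae_restrict_mem measurableSet_Ioo, hae] with r hr hra
      exact hfiber r hr.1.le hra
    · -- integrability of the norm-integral
      apply Integrable.mono' (g := fun r : ℝ => r * (4 * π * Real.log 2) - 2 * π * (r * Real.log r))
      · apply Integrable.sub
        · exact ((continuous_id.mul continuous_const).integrableOn_Icc (a := 0) (b := 1)).mono_set
            Set.Ioo_subset_Icc_self
        · exact ((continuous_const.mul Real.continuous_mul_log).integrableOn_Icc
            (a := 0) (b := 1)).mono_set Set.Ioo_subset_Icc_self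
      · exact (hGmeas.aestronglyMeasurable.norm.integral_prod_right')
      · filter_upwards [ae_restrict_mem measurableSet_Ioo, hae] with r hr hra
        have hrpos : 0 < r := hr.1
        have hne : ‖z‖ ≠ r := Ne.symm hra
        have hBc : Continuous fun θ : ℝ =>
            r * (2 * Real.log 2 - Real.log (‖z - r * Complex.exp (θ * I)‖)) :=
          continuous_const.mul (continuous_const.sub (log_abs_cont z hrpos.le hne))
        have hNc : Continuous fun θ : ℝ => ‖G (r, θ)‖ :=
          (continuous_const.mul (log_abs_cont z hrpos.le hne)).norm
        have hmono : ∫ θ in Set.Ioo (-π) π, ‖G (r, θ)‖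
            ≤ ∫ θ in Set.Ioo (-π) π,
              r * (2 * Real.log 2 - Real.log (‖z - r * Complex.exp (θ * I)‖)) := by
          apply MeasureTheory.integral_mono
          · exact (hNc.integrableOn_Icc).mono_set Set.Ioo_subset_Icc_self
          · exact (hBc.integrableOn_Icc).mono_set Set.Ioo_subset_Icc_self
          · intro θ
            simp only [hG, norm_mul, Real.norm_eq_abs, _root_.abs_of_pos hrpos]
            apply mul_le_mul_of_nonneg_left _ hrpos.le
            exact abs_log_le (sub_circle_pos z hrpos.le hne θ) (habs2 r hrpos.le hr.2 θ)
        have hBval : ∫ θ in Set.Ioo (-π) π,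
            r * (2 * Real.log 2 - Real.log (‖z - r * Complex.exp (θ * I)‖))
            = r * (2 * π * (2 * Real.log 2) - 2 * π * Real.log (max a r)) := by
          rw [MeasureTheory.integral_const_mul]
          congr 1
          rw [integral_sub (by exact integrableOn_const (by simp [Real.volume_Ioo]))
            ((log_abs_cont z hrpos.le hne).integrableOn_Icc.mono_set Set.Ioo_subset_Icc_self),
            circle_avg_Ioo z hrpos.le hne]
          rw [setIntegral_const, measureReal_def, Real.volume_Ioo,
            ENNReal.toReal_ofReal (by linarith : (0:ℝ) ≤ π - -π), smul_eq_mul]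
          ring
        rw [Real.norm_eq_abs, _root_.abs_of_nonneg (integral_nonneg (fun θ => norm_nonneg _))]
        refine hmono.trans ?_
        rw [hBval]
        have hlog : Real.log r ≤ Real.log (max a r) :=
          Real.log_le_log hrpos (le_max_right a r)
        nlinarith [mul_le_mul_of_nonneg_left hlog hrpos.le]
  -- polar coordinates
  have hpolar := Complex.integral_comp_polarCoord_symm
    (fun w => Set.indicator (Metric.ball (0:ℂ) 1)
      (fun w => Real.log (‖z - w‖)) w)
  rw [MeasureTheory.integral_indicator measurableSet_ball] at hpolar
  rw [← hpolar]
  have hSsub : S ⊆ polarCoord.target := by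
    rw [polarCoord_target, hS]
    exact Set.prod_mono (fun x hx => hx.1) le_rfl
  have heq : Set.EqOn
      (fun p : ℝ × ℝ => p.1 • Set.indicator (Metric.ball (0:ℂ) 1)
        (fun w => Real.log (‖z - w‖)) (Complex.polarCoord.symm p))
      (S.indicator G) polarCoord.target := by
    intro p hp
    rw [polarCoord_target] at hp
    have hp1 : 0 < p.1 := hp.1
    have habs : ‖Complex.polarCoord.symm p‖ = p.1 := by
      rw [Complex.norm_polarCoord_symm, _root_.abs_of_pos hp1]
    have hmem : Complex.polarCoord.symm p ∈ Metric.ball (0:ℂ) 1 ↔ p.1 < 1 := by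
      rw [Metric.mem_ball, Complex.dist_eq, sub_zero, habs]
    dsimp only
    by_cases h1 : p.1 < 1
    · rw [Set.indicator_of_mem (hmem.mpr h1),
        Set.indicator_of_mem (show p ∈ S by rw [hS]; exact ⟨⟨hp1, h1⟩, hp.2⟩)]
      rw [hG, polar_symm, smul_eq_mul]
    · rw [Set.indicator_of_notMem (fun hc => h1 (hmem.mp hc)),
        Set.indicator_of_notMem (show p ∉ S by rw [hS]; exact fun hc => h1 hc.1.2), smul_zero]
  rw [setIntegral_congr_fun (by rw [polarCoord_target]; exact measurableSet_Ioi.prod measurableSet_Ioo) heq]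
  rw [setIntegral_indicator (measurableSet_Ioo.prod measurableSet_Ioo)]
  rw [Set.inter_eq_right.mpr hSsub]
  rw [Measure.volume_eq_prod, hS, ← Measure.prod_restrict]
  rw [integral_prod _ hint]
  have hinner : ∀ᵐ r ∂(volume.restrict (Set.Ioo (0:ℝ) 1)),
      (∫ θ in Set.Ioo (-π) π, G (r, θ)) = r * (2 * π * Real.log (max a r)) := by
    filter_upwards [ae_restrict_mem measurableSet_Ioo, hae] with r hr hra
    rw [hG]
    simp only
    rw [MeasureTheory.integral_const_mul, circle_avg_Ioo z hr.1.le (Ne.symm hra)]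
  rw [integral_congr_ae hinner]
  rw [← integral_Ioc_eq_integral_Ioo, ← intervalIntegral.integral_of_le zero_le_one]
  exact radial_integral ha0 hz


/-- The uniform probability measure on the open unit disc in `ℂ`. -/
noncomputable def unifDisc : Measure ℂ :=
  (volume (Metric.ball (0 : ℂ) 1))⁻¹ • volume.restrict (Metric.ball (0 : ℂ) 1)

/-- If `X` is uniform on the unit disc and `z` is in the unit disc, then
`E[log|z - X|] = (|z|² - 1)/2`. -/
theorem expectation_log_abs_sub_uniform (z : ℂ) (hz : ‖z‖ < 1) :
    ∫ w, Real.log (‖z - w‖) ∂unifDisc = ((‖z‖) ^ 2 - 1) / 2 := by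
  rw [unifDisc, MeasureTheory.integral_smul_measure]
  have hb : ∫ w in Metric.ball (0:ℂ) 1, Real.log (‖z - w‖)
      = π * ((‖z‖)^2 - 1) / 2 := ball_integral z hz
  rw [hb, Complex.volume_ball]
  have h1 : ((ENNReal.ofReal 1 ^ 2 * (NNReal.pi : ENNReal))⁻¹).toReal = π⁻¹ := by
    rw [ENNReal.ofReal_one, one_pow, one_mul, ENNReal.toReal_inv, ENNReal.coe_toReal,
      NNReal.coe_real_pi]
  rw [h1, smul_eq_mul]
  field_simp
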